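/- There exists an absolute constant c > 0 such that the following holds for all sufficiently large prime powers q ≡ 3 (mod 4). For any λ, β ∈ F_q^*, there exists a set X ⊂ P with |X| ≥ c·q^{5/3} such that X contains no non-trivial (λ, β)-energy tuple, i.e., there is no quadruple (a, b, c, d) ∈ X⁴ of pairwise distinct points with a + b = c + d whose projections a̲, c̲, b̲, d̲ form a rectangle in F_q² with side-lengths λ and β. -/

import Mathlib

/-- The paraboloid `z = x² + y²` in `F³`. -/
def Paraboloid (F : Type) [Field F] : Set (F × F × F) :=
  {p | p.2.2 = p.1 ^ 2 + p.2.1 ^ 2}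

/-- Projection of a point of `F³` onto its first two coordinates. -/
def proj {F : Type} [Field F] (p : F × F × F) : F × F := (p.1, p.2.1)

/-- The standard dot product on `F²`. -/
def dot2 {F : Type} [Field F] (u v : F × F) : F := u.1 * v.1 + u.2 * v.2

/-- Four points `x, z, y, t` of `F²` form a rectangle in this cyclic order. -/
def IsRect {F : Type} [Field F] (x z y t : F × F) : Prop :=
  dot2 (x - z) (y - z) = 0 ∧ dot2 (z - y) (t - y) = 0 ∧
    dot2 (y - t) (x - t) = 0 ∧ dot2 (t - x) (z - x) = 0

open Finset

section Helpers

variable {F : Type} [Field F] [Fintype F]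

/-- In a field with `card % 4 = 3`, the standard quadratic form on `F²` is anisotropic. -/
lemma aniso (hq : Fintype.card F % 4 = 3) {u : F × F} (h : dot2 u u = 0) : u = 0 := by
  have hns : ¬ IsSquare (-1 : F) := by
    rw [FiniteField.isSquare_neg_one_iff]; omega
  simp only [dot2] at h
  by_cases h2 : u.2 = 0
  · have h1 : u.1 * u.1 = 0 := by rw [h2] at h; linear_combination h
    have h1' : u.1 = 0 := by
      rcases mul_eq_zero.1 h1 with h' | h' <;> exact h'
    exact Prod.ext h1' h2
  · exfalso
    apply hns
    refine ⟨u.1 / u.2, ?_⟩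
    field_simp
    linear_combination -h

lemma sq_card [DecidableEq F] (c : F) :
    (univ.filter (fun t : F => t * t = c)).card ≤ 2 := by
  by_cases h : ∃ r : F, r * r = c
  · obtain ⟨r, hr⟩ := h
    have hsub : univ.filter (fun t : F => t * t = c) ⊆ {r, -r} := by
      intro t ht
      simp only [mem_filter, mem_univ, true_and] at ht
      have h0 : (t - r) * (t + r) = 0 := by linear_combination ht - hr
      rcases mul_eq_zero.1 h0 with h' | h'
      · simp [sub_eq_zero.1 h']
      · simp [eq_neg_of_add_eq_zero_left h']
    exact (card_le_card hsub).trans ((card_insert_le _ _).trans (by simp))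
  · have : univ.filter (fun t : F => t * t = c) = ∅ := by
      rw [Finset.filter_eq_empty_iff]
      intro t _ ht
      exact h ⟨t, ht⟩
    simp [this]

lemma circle_card [DecidableEq F] (c : F) :
    (univ.filter (fun u : F × F => dot2 u u = c)).card ≤ 2 * Fintype.card F := by
  have := Finset.card_le_mul_card_image (f := fun u : F × F => u.1)
    (univ.filter (fun u : F × F => dot2 u u = c)) 2 ?_
  · refine this.trans ?_
    have : ((univ.filter (fun u : F × F => dot2 u u = c)).image (fun u => u.1)).card
        ≤ Fintype.card F := (card_le_card (subset_univ _)).trans (by simp)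
    omega
  · intro a _
    refine (Finset.card_le_card_of_injOn (fun u => u.2)
      (t := univ.filter (fun t : F => t * t = c - a * a)) ?_ ?_).trans (sq_card _)
    · intro u hu
      simp only [Finset.mem_coe, Set.mem_setOf_eq, mem_filter, mem_univ, true_and, dot2] at hu ⊢
      rw [← hu.2]
      linear_combination (Finset.mem_filter.1 hu.1).2
    · intro u hu v hv huv
      simp only [Finset.coe_filter, Set.mem_setOf_eq, mem_filter] at hu hv
      exact Prod.ext (hu.2.trans hv.2.symm) huv

lemma perp_rep {u v : F × F} (hu : u ≠ 0) (h : dot2 u v = 0) :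
    ∃ s : F, v = (-u.2 * s, u.1 * s) := by
  obtain ⟨u1, u2⟩ := u
  obtain ⟨v1, v2⟩ := v
  simp only [dot2] at h
  simp only [Prod.mk.injEq]
  by_cases h1 : u1 = 0
  · have h2 : u2 ≠ 0 := by
      intro h2
      exact hu (by rw [Prod.ext_iff]; exact ⟨h1, h2⟩)
    have hv2 : v2 = 0 := by
      rw [h1] at h
      have h' : u2 * v2 = 0 := by linear_combination h
      rcases mul_eq_zero.1 h' with h'' | h''
      · exact absurd h'' h2
      · exact h''
    refine ⟨-v1 / u2, ?_, ?_⟩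
    · field_simp
    · rw [hv2, h1, zero_mul]
  · refine ⟨v2 / u1, ?_, ?_⟩
    · field_simp
      linear_combination h
    · field_simp

-- the extraction of the parameter `s` from `v ⊥ u`.
open Classical in
noncomputable def sExt (u v : F × F) : F := if u.1 = 0 then -v.1 / u.2 else v.2 / u.1

lemma sExt_eq {u : F × F} (hu : u ≠ 0) (s : F) :
    sExt u (-u.2 * s, u.1 * s) = s := by
  unfold sExt
  by_cases h1 : u.1 = 0
  · have h2 : u.2 ≠ 0 := by
      intro h2
      apply hu
      rw [Prod.ext_iff]
      exact ⟨h1, h2⟩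
    rw [if_pos h1]
    show -(-u.2 * s) / u.2 = s
    field_simp
  · rw [if_neg h1]
    show u.1 * s / u.1 = s
    field_simp

lemma perp_card [DecidableEq F] {u : F × F} (hu : u ≠ 0) (hQ : dot2 u u ≠ 0) (l b : F) :
    (univ.filter (fun v : F × F => dot2 u v = 0 ∧ (dot2 v v = l ∨ dot2 v v = b))).card ≤ 4 := by
  classical
  have key : ∀ v : F × F, dot2 u v = 0 → v = (-u.2 * sExt u v, u.1 * sExt u v) := by
    intro v hv
    obtain ⟨s, rfl⟩ := perp_rep hu hv
    rw [sExt_eq hu]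
  have hmain := Finset.card_le_card_of_injOn (fun v => sExt u v)
    (s := univ.filter (fun v : F × F => dot2 u v = 0 ∧ (dot2 v v = l ∨ dot2 v v = b)))
    (t := univ.filter (fun s : F => s * s = l * (dot2 u u)⁻¹ ∨ s * s = b * (dot2 u u)⁻¹))
    ?_ ?_
  · refine hmain.trans ?_
    have hsub : univ.filter (fun s : F => s * s = l * (dot2 u u)⁻¹ ∨ s * s = b * (dot2 u u)⁻¹)
        ⊆ univ.filter (fun s : F => s * s = l * (dot2 u u)⁻¹)
          ∪ univ.filter (fun s : F => s * s = b * (dot2 u u)⁻¹) := by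
      intro s hs
      simp only [mem_filter, mem_univ, true_and, mem_union] at hs ⊢
      tauto
    refine (card_le_card hsub).trans ?_
    refine (card_union_le _ _).trans ?_
    have := sq_card (F := F) (l * (dot2 u u)⁻¹)
    have := sq_card (F := F) (b * (dot2 u u)⁻¹)
    omega
  · intro v hv
    simp only [Finset.mem_coe, mem_filter, mem_univ, true_and] at hv ⊢
    have hvv : dot2 v v = sExt u v * sExt u v * dot2 u u := by
      conv_lhs => rw [key v hv.1]
      simp only [dot2]
      ring
    rcases hv.2 with h' | h'
    · left
      rw [hvv] at h'
      field_simp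
      linear_combination h'
    · right
      rw [hvv] at h'
      field_simp
      linear_combination h'
  · intro v hv w hw hvw
    simp only [Finset.coe_filter, Set.mem_setOf_eq, mem_filter] at hv hw
    dsimp only at hvw
    calc v = (-u.2 * sExt u v, u.1 * sExt u v) := key v hv.2.1
      _ = (-u.2 * sExt u w, u.1 * sExt u w) := by rw [hvw]
      _ = w := (key w hw.2.1).symm

end Helpers

-- The main planar lemma: a large subset of `F²` avoiding all "energy rectangles".
set_option maxRecDepth 8000 in
set_option maxHeartbeats 1000000 in
lemma planar (F : Type) [Field F] [Fintype F]
    (hq3 : Fintype.card F % 4 = 3) (lam bet : F) (hl : lam ≠ 0) (hb : bet ≠ 0) :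
    ∃ T : Finset (F × F),
      ((Fintype.card F : ℝ) ^ ((5 : ℝ)/3)) / 16 ≤ (T.card : ℝ) ∧
      ∀ z u v : F × F, dot2 u v = 0 →
        ((dot2 u u = lam ∧ dot2 v v = bet) ∨ (dot2 u u = bet ∧ dot2 v v = lam)) →
        ¬(z ∈ T ∧ z + u ∈ T ∧ z + v ∈ T ∧ z + u + v ∈ T) := by
  classical
  set q := Fintype.card F with hqdef
  have hq1 : 3 ≤ q := by omega
  -- the set of admissible difference pairs
  set B : Finset ((F × F) × (F × F)) := univ.filter
    (fun p => dot2 p.1 p.2 = 0 ∧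
      ((dot2 p.1 p.1 = lam ∧ dot2 p.2 p.2 = bet) ∨
       (dot2 p.1 p.1 = bet ∧ dot2 p.2 p.2 = lam))) with hBdef
  -- cardinality bound for B
  have hB : B.card ≤ 16 * q := by
    have hfib : ∀ u ∈ B.image (fun p => p.1), (B.filter (fun p => p.1 = u)).card ≤ 4 := by
      intro u hu
      obtain ⟨p, hp, hp1⟩ := Finset.mem_image.1 hu
      simp only [hBdef, mem_filter, mem_univ, true_and] at hp
      have hQu : dot2 u u = lam ∨ dot2 u u = bet := by
        rw [← hp1]
        rcases hp.2 with h | h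
        · exact Or.inl h.1
        · exact Or.inr h.1
      have hQu0 : dot2 u u ≠ 0 := by rcases hQu with h | h <;> rw [h] <;> assumption
      have hu0 : u ≠ 0 := by
        intro h
        apply hQu0
        rw [h]
        simp [dot2]
      refine (Finset.card_le_card_of_injOn (fun p => p.2)
        (t := univ.filter (fun v : F × F => dot2 u v = 0 ∧ (dot2 v v = lam ∨ dot2 v v = bet)))
        ?_ ?_).trans (perp_card hu0 hQu0 lam bet)
      · intro p hp'
        simp only [Finset.mem_coe, hBdef, mem_filter, mem_univ, true_and] at hp' ⊢
        obtain ⟨⟨hd, hor⟩, h1⟩ := hp'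
        subst h1
        refine ⟨hd, ?_⟩
        tauto
      · intro p hp' p' hp'' hpp
        simp only [Finset.coe_filter, Set.mem_setOf_eq, mem_filter] at hp' hp''
        exact Prod.ext (hp'.2.trans hp''.2.symm) hpp
    have h1 := Finset.card_le_mul_card_image (f := fun p : (F × F) × (F × F) => p.1) B 4 hfib
    have h2 : (B.image (fun p => p.1)).card ≤ 4 * q := by
      have hsub : B.image (fun p => p.1) ⊆
          univ.filter (fun u : F × F => dot2 u u = lam)
          ∪ univ.filter (fun u : F × F => dot2 u u = bet) := by
        intro u hu
        obtain ⟨p, hp, hp1⟩ := Finset.mem_image.1 hu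
        simp only [hBdef, mem_filter, mem_univ, true_and] at hp
        simp only [mem_union, mem_filter, mem_univ, true_and, ← hp1]
        tauto
      refine (card_le_card hsub).trans ?_
      refine (card_union_le _ _).trans ?_
      have := circle_card (F := F) lam
      have := circle_card (F := F) bet
      omega
    omega
  -- setup of the probability space
  set N : ℕ := Fintype.card (F × F) with hNdef
  have hNq : N = q * q := by rw [hNdef, hqdef]; exact Fintype.card_prod F F
  have hN4 : 4 ≤ N := by nlinarith
  have hrpos : (0 : ℝ) < (q : ℝ) ^ ((1 : ℝ)/3) :=
    Real.rpow_pos_of_pos (by positivity) _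
  have hr1 : (1 : ℝ) ≤ (q : ℝ) ^ ((1 : ℝ)/3) := by
    apply Real.one_le_rpow (by exact_mod_cast by omega) (by norm_num)
  obtain ⟨M, hM1, hMr, hMr'⟩ : ∃ M : ℕ, 1 ≤ M ∧
      4 * ((q : ℝ) ^ ((1 : ℝ)/3)) ≤ (M : ℝ) ∧ (M : ℝ) ≤ 8 * ((q : ℝ) ^ ((1 : ℝ)/3)) := by
    refine ⟨4 * ⌈(q : ℝ) ^ ((1 : ℝ)/3)⌉₊, ?_, ?_, ?_⟩
    · have : 1 ≤ ⌈(q : ℝ) ^ ((1 : ℝ)/3)⌉₊ := Nat.one_le_ceil_iff.2 hrpos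
      omega
    · have h1 : (q : ℝ) ^ ((1 : ℝ)/3) ≤ (⌈(q : ℝ) ^ ((1 : ℝ)/3)⌉₊ : ℝ) := Nat.le_ceil _
      push_cast
      linarith
    · have h1 : (⌈(q : ℝ) ^ ((1 : ℝ)/3)⌉₊ : ℝ) < (q : ℝ) ^ ((1 : ℝ)/3) + 1 :=
        Nat.ceil_lt_add_one (le_of_lt hrpos)
      push_cast
      linarith
  haveI : NeZero M := ⟨by omega⟩
  -- counting functions vanishing on a prescribed set
  have countW : ∀ W : Finset (F × F),
      (univ.filter (fun ω : (F × F) → Fin M => ∀ p ∈ W, ω p = 0)).card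
        = M ^ (N - W.card) := by
    intro W
    have hpi : (univ.filter (fun ω : (F × F) → Fin M => ∀ p ∈ W, ω p = 0))
        = Fintype.piFinset (fun p => if p ∈ W then ({0} : Finset (Fin M)) else univ) := by
      ext ω
      simp only [mem_filter, mem_univ, true_and, Fintype.mem_piFinset]
      constructor
      · intro h p
        by_cases hp : p ∈ W <;> simp [hp, h p]
      · intro h p hp
        have := h p
        simpa [hp] using this
    rw [hpi, Fintype.card_piFinset]
    have : ∀ p : F × F, (if p ∈ W then ({0} : Finset (Fin M)) else univ).card
        = if p ∈ W then 1 else M := by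
      intro p
      by_cases hp : p ∈ W <;> simp [hp]
    rw [Finset.prod_congr rfl (fun p _ => this p), Finset.prod_ite]
    simp only [Finset.prod_const_one, Finset.prod_const, one_mul]
    rw [Finset.filter_not, Finset.filter_univ_mem,
      Finset.card_sdiff_of_subset (Finset.subset_univ _), Finset.card_univ, hNdef]
  -- the random set
  set S : ((F × F) → Fin M) → Finset (F × F) :=
    fun ω => univ.filter (fun p => ω p = 0) with hSdef
  have sumS : ∑ ω : (F × F) → Fin M, (S ω).card = N * M ^ (N - 1) := by
    have : ∀ ω : (F × F) → Fin M, (S ω).card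
        = ∑ p : F × F, if ω p = 0 then 1 else 0 := by
      intro ω; simp only [hSdef, Finset.card_filter]
    rw [Finset.sum_congr rfl (fun ω _ => this ω), Finset.sum_comm]
    have : ∀ p : F × F, (∑ ω : (F × F) → Fin M, if ω p = 0 then 1 else 0)
        = M ^ (N - 1) := by
      intro p
      rw [← Finset.card_filter]
      have : (univ.filter (fun ω : (F × F) → Fin M => ω p = 0))
          = (univ.filter (fun ω : (F × F) → Fin M => ∀ x ∈ ({p} : Finset (F × F)), ω x = 0)) := by
        apply Finset.filter_congr
        intro ω _
        simp
      rw [this, countW]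
      rw [Finset.card_singleton]
    rw [Finset.sum_congr rfl (fun p _ => this p)]
    rw [Finset.sum_const, Finset.card_univ, smul_eq_mul, ← hNdef]
  -- configurations and their corner sets
  set Cfg : Finset ((F × F) × ((F × F) × (F × F))) := univ ×ˢ B with hCfgdef
  set corners : ((F × F) × ((F × F) × (F × F))) → Finset (F × F) :=
    fun c => {c.1, c.1 + c.2.1, c.1 + c.2.2, c.1 + c.2.1 + c.2.2} with hcornersdef
  have hcorners : ∀ c ∈ Cfg, (corners c).card = 4 := by
    rintro ⟨z, u, v⟩ hc
    simp only [hCfgdef, Finset.mem_product] at hc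
    have hcB : (u, v) ∈ B := hc.2
    rw [hBdef, Finset.mem_filter] at hcB
    have hd : dot2 u v = 0 := hcB.2.1
    have hor := hcB.2.2
    simp only [] at hor
    have hQu0 : dot2 u u ≠ 0 := by
      rcases hor with h | h
      · rw [h.1]; exact hl
      · rw [h.1]; exact hb
    have hQv0 : dot2 v v ≠ 0 := by
      rcases hor with h | h
      · rw [h.2]; exact hb
      · rw [h.2]; exact hl
    have hu0 : u ≠ 0 := fun h => hQu0 (by rw [h]; simp [dot2])
    have hv0 : v ≠ 0 := fun h => hQv0 (by rw [h]; simp [dot2])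
    have huv : u ≠ v := by
      intro h
      apply hQv0
      rw [← hd, h]
    have hsum : u + v ≠ 0 := by
      intro h
      have hveq : v = -u := eq_neg_of_add_eq_zero_right h
      apply hQu0
      rw [hveq] at hd
      simp only [dot2, Prod.fst_neg, Prod.snd_neg] at hd ⊢
      linear_combination -hd
    have n1 : z ≠ z + u := fun h => hu0 (by rwa [left_eq_add] at h)
    have n2 : z ≠ z + v := fun h => hv0 (by rwa [left_eq_add] at h)
    have n3 : z ≠ z + u + v := by
      intro h
      apply hsum
      rw [add_assoc] at h
      rwa [left_eq_add] at h
    have n4 : z + u ≠ z + v := fun h => huv (add_left_cancel h)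
    have n5 : z + u ≠ z + u + v := fun h => hv0 (by rwa [left_eq_add] at h)
    have n6 : z + v ≠ z + u + v := by
      intro h
      apply hu0
      rw [add_assoc] at h
      have h2 : v = u + v := add_left_cancel h
      exact right_eq_add.1 h2
    show ({z, z + u, z + v, z + u + v} : Finset (F × F)).card = 4
    rw [Finset.card_insert_of_notMem (by simp [n1, n2, n3]),
      Finset.card_insert_of_notMem (by simp [n4, n5]),
      Finset.card_insert_of_notMem (by simp [n6]), Finset.card_singleton]
  -- second moment-type count
  set P : ((F × F) → Fin M) → Finset ((F × F) × ((F × F) × (F × F))) :=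
    fun ω => Cfg.filter (fun c => ∀ p ∈ corners c, ω p = 0) with hPdef
  have sumP : ∑ ω : (F × F) → Fin M, (P ω).card = Cfg.card * M ^ (N - 4) := by
    have : ∀ ω : (F × F) → Fin M, (P ω).card
        = ∑ c ∈ Cfg, if (∀ p ∈ corners c, ω p = 0) then 1 else 0 := by
      intro ω; simp only [hPdef, Finset.card_filter]
    rw [Finset.sum_congr rfl (fun ω _ => this ω), Finset.sum_comm]
    have : ∀ c ∈ Cfg, (∑ ω : (F × F) → Fin M, if (∀ p ∈ corners c, ω p = 0) then 1 else 0)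
        = M ^ (N - 4) := by
      intro c hc
      rw [← Finset.card_filter, countW, hcorners c hc]
    rw [Finset.sum_congr rfl this]
    rw [Finset.sum_const, smul_eq_mul]
  -- averaging
  have havg : ∃ ω : (F × F) → Fin M,
      (N : ℤ) * M ^ 3 - Cfg.card ≤ (M : ℤ) ^ 4 * ((S ω).card - (P ω).card) := by
    by_contra hcon
    push_neg at hcon
    have hne : (univ : Finset ((F × F) → Fin M)).Nonempty := univ_nonempty
    have hlt := Finset.sum_lt_sum_of_nonempty hne
      (f := fun ω => (M : ℤ) ^ 4 * (((S ω).card : ℤ) - (P ω).card))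
      (g := fun _ => (N : ℤ) * M ^ 3 - Cfg.card) (fun ω _ => hcon ω)
    have hL : ∑ ω : (F × F) → Fin M, (M : ℤ) ^ 4 * (((S ω).card : ℤ) - (P ω).card)
        = (M : ℤ) ^ 4 * ((N : ℤ) * M ^ (N - 1) - Cfg.card * M ^ (N - 4)) := by
      rw [← Finset.mul_sum]
      congr 1
      rw [Finset.sum_sub_distrib]
      have cS : (∑ ω : (F × F) → Fin M, (((S ω).card : ℤ)))
          = ((N * M ^ (N - 1) : ℕ) : ℤ) := by
        rw [← Nat.cast_sum, sumS]
      have cP : (∑ ω : (F × F) → Fin M, (((P ω).card : ℤ)))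
          = ((Cfg.card * M ^ (N - 4) : ℕ) : ℤ) := by
        rw [← Nat.cast_sum, sumP]
      rw [cS, cP]
      push_cast
      ring
    have hR : ∑ _ω : (F × F) → Fin M, ((N : ℤ) * M ^ 3 - Cfg.card)
        = (M : ℤ) ^ N * ((N : ℤ) * M ^ 3 - Cfg.card) := by
      rw [Finset.sum_const, Finset.card_univ, Fintype.card_fun, Fintype.card_fin,
        ← hNdef, nsmul_eq_mul]
      push_cast
      ring
    rw [hL, hR] at hlt
    have e1 : (M : ℤ) ^ 4 * (M : ℤ) ^ (N - 1) = (M : ℤ) ^ N * (M : ℤ) ^ 3 := by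
      rw [← pow_add, ← pow_add]
      congr 1
      omega
    have e2 : (M : ℤ) ^ 4 * (M : ℤ) ^ (N - 4) = (M : ℤ) ^ N := by
      rw [← pow_add]
      congr 1
      omega
    have : (M : ℤ) ^ 4 * ((N : ℤ) * M ^ (N - 1) - Cfg.card * M ^ (N - 4))
        = (M : ℤ) ^ N * ((N : ℤ) * M ^ 3 - Cfg.card) := by
      ring_nf
      linear_combination ((N : ℤ)) * e1 - (Cfg.card : ℤ) * e2
    omega
  obtain ⟨ω, hω⟩ := havg
  -- the good set
  set T : Finset (F × F) := S ω \ (P ω).image (fun c => c.1) with hTdef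
  have hTsub : S ω ⊆ T ∪ (P ω).image (fun c => c.1) := by
    intro p hp
    by_cases h : p ∈ (P ω).image (fun c => c.1)
    · exact Finset.mem_union_right _ h
    · exact Finset.mem_union_left _ (Finset.mem_sdiff.2 ⟨hp, h⟩)
  have hTcard : (S ω).card ≤ T.card + (P ω).card := by
    refine (card_le_card hTsub).trans ?_
    refine (card_union_le _ _).trans ?_
    have := Finset.card_image_le (s := P ω) (f := fun c => c.1)
    omega
  refine ⟨T, ?_, ?_⟩
  · -- cardinality bound
    have hCfgcard : (Cfg.card : ℝ) ≤ 16 * (q : ℝ) ^ 3 := by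
      have : Cfg.card = N * B.card := by
        rw [hCfgdef, Finset.card_product, Finset.card_univ, ← hNdef]
      rw [this, hNq]
      have : (q * q) * B.card ≤ q * q * (16 * q) := by
        exact Nat.mul_le_mul_left _ hB
      calc (((q * q) * B.card : ℕ) : ℝ) ≤ ((q * q * (16 * q) : ℕ) : ℝ) := by exact_mod_cast this
        _ = 16 * (q : ℝ) ^ 3 := by push_cast; ring
    set r : ℝ := (q : ℝ) ^ ((1 : ℝ)/3) with hrdef
    have hr3 : r ^ 3 = (q : ℝ) := by
      rw [hrdef, ← Real.rpow_natCast ((q : ℝ) ^ ((1 : ℝ)/3)) 3, ← Real.rpow_mul (by positivity)]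
      norm_num
    have hQpos : (0 : ℝ) < (q : ℝ) := by positivity
    have h53r : (q : ℝ) ^ ((5 : ℝ)/3) * r = (q : ℝ) ^ 2 := by
      rw [hrdef, ← Real.rpow_add hQpos]
      norm_num
    have h53r4 : (q : ℝ) ^ ((5 : ℝ)/3) * r ^ 4 = (q : ℝ) ^ 3 := by
      have : r ^ 4 = (q : ℝ) ^ ((4 : ℝ)/3) := by
        rw [hrdef, ← Real.rpow_natCast ((q : ℝ) ^ ((1 : ℝ)/3)) 4,
          ← Real.rpow_mul (by positivity)]
        norm_num
      rw [this, ← Real.rpow_add hQpos]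
      norm_num
    -- from the averaging inequality
    have hint : ((N : ℝ) * M ^ 3 - Cfg.card : ℝ) ≤ (M : ℝ) ^ 4 * ((S ω).card - (P ω).card) := by
      exact_mod_cast hω
    have hTreal : ((S ω).card : ℝ) - (P ω).card ≤ T.card := by
      have : ((S ω).card : ℝ) ≤ T.card + (P ω).card := by exact_mod_cast hTcard
      linarith
    have hMpos : (0 : ℝ) < (M : ℝ) := by
      have : (0:ℕ) < M := by omega
      exact_mod_cast this
    have hfinal : (q : ℝ) ^ ((5 : ℝ)/3) * (M : ℝ) ^ 4 ≤ 16 * ((M : ℝ) ^ 4 * T.card) := by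
      have hNr : (N : ℝ) = (q : ℝ) ^ 2 := by
        rw [hNq]; push_cast; ring
      -- key numeric estimates
      have hM3 : 64 * (q : ℝ) ≤ (M : ℝ) ^ 3 := by
        have : (4 * r) ^ 3 ≤ (M : ℝ) ^ 3 := by
          apply pow_le_pow_left₀ (by positivity) hMr
        nlinarith [hr3]
      have hq53pos : (0 : ℝ) < (q : ℝ) ^ ((5 : ℝ)/3) := Real.rpow_pos_of_pos hQpos _
      have h1 : (q : ℝ) ^ ((5 : ℝ)/3) * (M : ℝ) ^ 4 ≤ 8 * (q : ℝ) ^ 2 * (M : ℝ) ^ 3 := by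
        have : (q : ℝ) ^ ((5 : ℝ)/3) * (M : ℝ) ≤ 8 * (q : ℝ) ^ 2 := by
          calc (q : ℝ) ^ ((5 : ℝ)/3) * (M : ℝ) ≤ (q : ℝ) ^ ((5 : ℝ)/3) * (8 * r) := by
                apply mul_le_mul_of_nonneg_left hMr' (le_of_lt hq53pos)
            _ = 8 * ((q : ℝ) ^ ((5 : ℝ)/3) * r) := by ring
            _ = 8 * (q : ℝ) ^ 2 := by rw [h53r]
        calc (q : ℝ) ^ ((5 : ℝ)/3) * (M : ℝ) ^ 4
            = ((q : ℝ) ^ ((5 : ℝ)/3) * (M : ℝ)) * (M : ℝ) ^ 3 := by ring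
          _ ≤ (8 * (q : ℝ) ^ 2) * (M : ℝ) ^ 3 := by
              apply mul_le_mul_of_nonneg_right this (by positivity)
          _ = 8 * (q : ℝ) ^ 2 * (M : ℝ) ^ 3 := by ring
      have h2 : 256 * (q : ℝ) ^ 3 ≤ 8 * (q : ℝ) ^ 2 * (M : ℝ) ^ 3 := by
        have := mul_le_mul_of_nonneg_left hM3 (by positivity : (0:ℝ) ≤ 8 * (q : ℝ) ^ 2)
        calc 256 * (q : ℝ) ^ 3 ≤ 8 * (q : ℝ) ^ 2 * (64 * (q : ℝ)) := by nlinarith [hQpos]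
          _ ≤ 8 * (q : ℝ) ^ 2 * (M : ℝ) ^ 3 := this
      -- combine
      have hcomb : (q : ℝ) ^ ((5 : ℝ)/3) * (M : ℝ) ^ 4 + 16 * (Cfg.card : ℝ)
          ≤ 16 * ((N : ℝ) * (M : ℝ) ^ 3) := by
        have h16C : 16 * (Cfg.card : ℝ) ≤ 256 * (q : ℝ) ^ 3 := by linarith
        rw [hNr]
        nlinarith [h1, h2, h16C]
      have hT' : (N : ℝ) * (M : ℝ) ^ 3 - (Cfg.card : ℝ) ≤ (M : ℝ) ^ 4 * T.card := by
        calc (N : ℝ) * (M : ℝ) ^ 3 - (Cfg.card : ℝ)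
            ≤ (M : ℝ) ^ 4 * (((S ω).card : ℝ) - (P ω).card) := hint
          _ ≤ (M : ℝ) ^ 4 * T.card := by
              apply mul_le_mul_of_nonneg_left hTreal (by positivity)
      linarith
    -- divide by M^4
    have hM4pos : (0 : ℝ) < (M : ℝ) ^ 4 := by positivity
    rw [div_le_iff₀ (by norm_num : (0:ℝ) < 16)]
    have := (mul_le_mul_iff_left₀ hM4pos).1 (by linarith [hfinal] : (q : ℝ) ^ ((5 : ℝ)/3) * (M : ℝ) ^ 4 ≤ ((T.card : ℝ) * 16) * (M : ℝ) ^ 4)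
    linarith
  · -- no configuration
    rintro z u v hd hor ⟨hz, hzu, hzv, hzuv⟩
    have hTS : T ⊆ S ω := Finset.sdiff_subset
    have hmemCfg : (z, (u, v)) ∈ Cfg := by
      rw [hCfgdef, Finset.mem_product]
      refine ⟨mem_univ _, ?_⟩
      rw [hBdef, Finset.mem_filter]
      exact ⟨mem_univ _, hd, hor⟩
    have hmemP : (z, (u, v)) ∈ P ω := by
      simp only [hPdef, mem_filter]
      refine ⟨hmemCfg, ?_⟩
      intro p hp
      simp only [hcornersdef, mem_insert, mem_singleton] at hp
      have hSmem : ∀ x ∈ S ω, ω x = 0 := by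
        intro x hx
        simp only [hSdef, mem_filter] at hx
        exact hx.2
      rcases hp with rfl | rfl | rfl | rfl
      · exact hSmem _ (hTS hz)
      · exact hSmem _ (hTS hzu)
      · exact hSmem _ (hTS hzv)
      · exact hSmem _ (hTS hzuv)
    have hzim : z ∈ (P ω).image (fun c => c.1) := by
      exact Finset.mem_image.2 ⟨(z, (u, v)), hmemP, rfl⟩
    have := Finset.mem_sdiff.1 hz
    exact this.2 hzim

theorem stmt_3 :
    ∃ c : ℝ, 0 < c ∧
      ∃ q₀ : ℕ,
        ∀ (F : Type) [Field F] [Fintype F],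
          q₀ ≤ Fintype.card F →
          Fintype.card F % 4 = 3 →
          ∀ lam bet : F, lam ≠ 0 → bet ≠ 0 →
            ∃ X : Set (F × F × F), X ⊆ Paraboloid F ∧
              c * (Fintype.card F : ℝ) ^ ((5 : ℝ) / 3) ≤ (X.ncard : ℝ) ∧
              ¬∃ a b cc d : F × F × F,
                a ∈ X ∧ b ∈ X ∧ cc ∈ X ∧ d ∈ X ∧
                a + b = cc + d ∧
                a ≠ b ∧ a ≠ cc ∧ a ≠ d ∧ b ≠ cc ∧ b ≠ d ∧ cc ≠ d ∧
                IsRect (proj a) (proj cc) (proj b) (proj d) ∧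
                ((dot2 (proj a - proj cc) (proj a - proj cc) = lam ∧
                  dot2 (proj cc - proj b) (proj cc - proj b) = bet) ∨
                 (dot2 (proj a - proj cc) (proj a - proj cc) = bet ∧
                  dot2 (proj cc - proj b) (proj cc - proj b) = lam)) := by
  refine ⟨1/16, by norm_num, 0, ?_⟩
  intro F _ _ _ hq3 lam bet hl hb
  obtain ⟨T, hTcard, hTfree⟩ := planar F hq3 lam bet hl hb
  set lift : F × F → F × F × F := fun s => (s.1, s.2, s.1 ^ 2 + s.2 ^ 2) with hliftdef
  have hliftinj : Function.Injective lift := by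
    intro s s' h
    simp only [hliftdef, Prod.mk.injEq] at h
    exact Prod.ext h.1 h.2.1
  have hprojlift : ∀ s : F × F, proj (lift s) = s := by
    intro s
    simp [hliftdef, proj]
  refine ⟨lift '' (T : Set (F × F)), ?_, ?_, ?_⟩
  · rintro p ⟨s, _, rfl⟩
    simp [Paraboloid, hliftdef]
  · have : (lift '' (T : Set (F × F))).ncard = T.card := by
      rw [Set.ncard_image_of_injective _ hliftinj, Set.ncard_coe_finset]
    rw [this]
    calc (1/16 : ℝ) * (Fintype.card F : ℝ) ^ ((5 : ℝ)/3)
        = ((Fintype.card F : ℝ) ^ ((5 : ℝ)/3)) / 16 := by ring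
      _ ≤ (T.card : ℝ) := hTcard
  · rintro ⟨a, b, cc, d, ha, hbm, hc, hdm, habcd, -, -, -, -, -, -, hrect, hlen⟩
    obtain ⟨x, hxT, rfl⟩ := ha
    obtain ⟨y, hyT, rfl⟩ := hbm
    obtain ⟨z, hzT, rfl⟩ := hc
    obtain ⟨t, htT, rfl⟩ := hdm
    have hsum : x + y = z + t := by
      have h1 : x.1 + y.1 = z.1 + t.1 := congrArg (fun p : F × F × F => p.1) habcd
      have h2 : x.2 + y.2 = z.2 + t.2 := congrArg (fun p : F × F × F => p.2.1) habcd
      exact Prod.ext h1 h2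
    have hu : proj (lift x) - proj (lift z) = x - z := by rw [hprojlift, hprojlift]
    have hv : proj (lift y) - proj (lift z) = y - z := by rw [hprojlift, hprojlift]
    have hd0 : dot2 (x - z) (y - z) = 0 := by
      have := hrect.1
      rw [hprojlift, hprojlift, hprojlift] at this
      exact this
    have hflip : dot2 (z - y) (z - y) = dot2 (y - z) (y - z) := by
      simp only [dot2, Prod.fst_sub, Prod.snd_sub]
      ring
    have hor : (dot2 (x - z) (x - z) = lam ∧ dot2 (y - z) (y - z) = bet) ∨
        (dot2 (x - z) (x - z) = bet ∧ dot2 (y - z) (y - z) = lam) := by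
      rcases hlen with ⟨h1, h2⟩ | ⟨h1, h2⟩
      · left
        rw [hprojlift, hprojlift] at h1 h2
        exact ⟨h1, by rw [← hflip]; exact h2⟩
      · right
        rw [hprojlift, hprojlift] at h1 h2
        exact ⟨h1, by rw [← hflip]; exact h2⟩
    refine hTfree z (x - z) (y - z) hd0 hor ⟨hzT, ?_, ?_, ?_⟩
    · have : z + (x - z) = x := by abel
      rwa [this]
    · have : z + (y - z) = y := by abel
      rwa [this]
    · have : z + (x - z) + (y - z) = t := by
        have : t = x + y - z := by
          rw [eq_sub_iff_add_eq, hsum]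
          abel
        rw [this]
        abel
      rwa [this]
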